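/- arXiv:1902.04548 — 2 statements merged into one kernel-verified Lean document; each statement's English description precedes it below -/
import Mathlib

section
/- Let α = (α_i)_{i∈ℕ} be a summable sequence of positive reals, non-increasing, with α_1 ≤ (1/n) Σ_i α_i =: a. Then among all positive definite n×n matrices G whose eigenvalue sequence λ(G) (in non-increasing order) majorizes α (i.e., Σ_{i≤m} λ_i ≥ Σ_{i≤m} α_i for m < n and Σ_{i≤n} λ_i = Σ_i α_i), the matrix G* = a·Iₙ uniquely minimizes trace(G⁻¹), with minimal value n/a. -/
open Matrix

/-- The eigenvalue sequence of the Hermitian matrix `G` (suitably reordered so as to be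
non-increasing) majorizes the sequence `α`. -/
def EigMajorizes {n : ℕ} {G : Matrix (Fin n) (Fin n) ℝ} (hG : G.IsHermitian)
    (α : ℕ → ℝ) : Prop :=
  ∃ σ : Equiv.Perm (Fin n),
    (∀ i j : Fin n, i ≤ j → hG.eigenvalues (σ j) ≤ hG.eigenvalues (σ i)) ∧
    (∀ m : ℕ, m < n →
      ∑ i ∈ Finset.range m, α i ≤
        ∑ i ∈ Finset.univ.filter (fun i : Fin n => (i : ℕ) < m), hG.eigenvalues (σ i)) ∧
    (∑ i : Fin n, hG.eigenvalues i) = ∑' i, α i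

section Aux

variable {n : ℕ}

lemma aux_eig_smul_one (a : ℝ) (h : (a • (1 : Matrix (Fin n) (Fin n) ℝ)).IsHermitian)
    (i : Fin n) : h.eigenvalues i = a := by
  have hd := h.conjStarAlgAut_star_eigenvectorUnitary
  rw [Unitary.conjStarAlgAut_star_apply] at hd
  have hU2 : (star (h.eigenvectorUnitary : Matrix (Fin n) (Fin n) ℝ)) *
      (h.eigenvectorUnitary : Matrix (Fin n) (Fin n) ℝ) = 1 :=
    Matrix.mem_unitaryGroup_iff'.mp h.eigenvectorUnitary.2
  rw [Matrix.mul_smul, mul_one, Matrix.smul_mul, hU2] at hd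
  have := congrFun (congrFun hd i) i
  simpa using this.symm

lemma aux_trace_inv (G : Matrix (Fin n) (Fin n) ℝ) (hG : G.PosDef) :
    Matrix.trace G⁻¹ = ∑ i, (hG.1.eigenvalues i)⁻¹ := by
  set U : Matrix (Fin n) (Fin n) ℝ := (hG.1.eigenvectorUnitary : Matrix (Fin n) (Fin n) ℝ) with hUdef
  have hU1 : U * star U = 1 := Matrix.mem_unitaryGroup_iff.mp hG.1.eigenvectorUnitary.2
  have hU2 : star U * U = 1 := Matrix.mem_unitaryGroup_iff'.mp hG.1.eigenvectorUnitary.2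
  have hne : ∀ i, hG.1.eigenvalues i ≠ 0 := fun i => (hG.eigenvalues_pos i).ne'
  have key : ∀ (D D' : Matrix (Fin n) (Fin n) ℝ),
      (U * D * star U) * (U * D' * star U) = U * (D * D') * star U := by
    intro D D'
    simp only [Matrix.mul_assoc]
    rw [← Matrix.mul_assoc (star U) U, hU2, one_mul]
  have hGi : G⁻¹ = U * Matrix.diagonal (fun i => (hG.1.eigenvalues i)⁻¹) * star U := by
    apply inv_eq_right_inv
    nth_rewrite 1 [hG.1.spectral_theorem]
    rw [Unitary.conjStarAlgAut_apply, key, Matrix.diagonal_mul_diagonal]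
    have : (fun i => (RCLike.ofReal ∘ hG.1.eigenvalues) i * (hG.1.eigenvalues i)⁻¹)
        = fun _ => (1 : ℝ) := by
      funext i
      simp [mul_inv_cancel₀ (hne i)]
    rw [this, Matrix.diagonal_one, mul_one, hU1]
  rw [hGi, Matrix.trace_mul_cycle, hU2, one_mul, Matrix.trace_diagonal]

lemma aux_trace_eq_sum (A : Matrix (Fin n) (Fin n) ℝ) (hA : A.IsHermitian) :
    Matrix.trace A = ∑ i, hA.eigenvalues i := by
  have hU2 : star (hA.eigenvectorUnitary : Matrix (Fin n) (Fin n) ℝ) *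
      (hA.eigenvectorUnitary : Matrix (Fin n) (Fin n) ℝ) = 1 :=
    Matrix.mem_unitaryGroup_iff'.mp hA.eigenvectorUnitary.2
  conv_lhs => rw [hA.spectral_theorem, Unitary.conjStarAlgAut_apply]
  rw [Matrix.trace_mul_cycle, hU2, one_mul, Matrix.trace_diagonal]
  simp

end Aux

theorem scaled_identity_uniquely_minimizes_trace_inverse
    {n : ℕ} (hn : 0 < n) (α : ℕ → ℝ) (hpos : ∀ i, 0 < α i)
    (hmono : ∀ i j, i ≤ j → α j ≤ α i) (hsum : Summable α)
    (a : ℝ) (ha : a = (1 / n) * ∑' i, α i) (hα1 : α 0 ≤ a) :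
    (∃ h1 : (a • (1 : Matrix (Fin n) (Fin n) ℝ)).PosDef, EigMajorizes h1.1 α) ∧
    Matrix.trace (a • (1 : Matrix (Fin n) (Fin n) ℝ))⁻¹ = n / a ∧
    ∀ (G : Matrix (Fin n) (Fin n) ℝ) (hG : G.PosDef), EigMajorizes hG.1 α →
      (n : ℝ) / a ≤ Matrix.trace G⁻¹ ∧
      (Matrix.trace G⁻¹ = n / a → G = a • (1 : Matrix (Fin n) (Fin n) ℝ)) := by
  have hts : 0 < ∑' i, α i := Summable.tsum_pos hsum (fun i => (hpos i).le) 0 (hpos 0)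
  have hnR : (0 : ℝ) < n := Nat.cast_pos.mpr hn
  have hap : 0 < a := by rw [ha]; positivity
  have hna : (n : ℝ) * a = ∑' i, α i := by
    rw [ha]; field_simp
  have hPD : (a • (1 : Matrix (Fin n) (Fin n) ℝ)).PosDef := by
    rw [smul_one_eq_diagonal]
    exact Matrix.PosDef.diagonal fun _ => hap
  refine ⟨⟨hPD, ?_⟩, ?_, ?_⟩
  · refine ⟨Equiv.refl _, ?_, ?_, ?_⟩
    · intro i j _
      rw [aux_eig_smul_one a hPD.1, aux_eig_smul_one a hPD.1]
    · intro m hm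
      have hcard : (Finset.univ.filter fun i : Fin n => (i : ℕ) < m).card = m := by
        have heq : Finset.univ.filter (fun i : Fin n => (i : ℕ) < m) =
            (Finset.range m).attachFin
              (fun x hx => lt_of_lt_of_le (Finset.mem_range.mp hx) hm.le) := by
          ext i
          simp [Finset.mem_attachFin]
        rw [heq, Finset.card_attachFin, Finset.card_range]
      calc ∑ i ∈ Finset.range m, α i ≤ ∑ _i ∈ Finset.range m, a :=
            Finset.sum_le_sum fun i _ => le_trans (hmono 0 i (Nat.zero_le i)) hα1
        _ = m * a := by rw [Finset.sum_const, Finset.card_range, nsmul_eq_mul]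
        _ = ∑ i ∈ Finset.univ.filter (fun i : Fin n => (i : ℕ) < m),
              hPD.1.eigenvalues ((Equiv.refl (Fin n)) i) := by
            simp only [Equiv.refl_apply, aux_eig_smul_one a hPD.1]
            rw [Finset.sum_const, hcard, nsmul_eq_mul]
    · simp only [aux_eig_smul_one a hPD.1, Finset.sum_const, Finset.card_univ,
        Fintype.card_fin, nsmul_eq_mul]
      exact hna
  · rw [aux_trace_inv _ hPD]
    simp only [aux_eig_smul_one a hPD.1, Finset.sum_const, Finset.card_univ,
      Fintype.card_fin, nsmul_eq_mul]
    rw [div_eq_mul_inv]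
  · intro G hG hmaj
    obtain ⟨σ, _, _, hσsum⟩ := hmaj
    set ev : Fin n → ℝ := hG.1.eigenvalues with hev
    have hevpos : ∀ i, 0 < ev i := hG.eigenvalues_pos
    have hsumev : ∑ i, ev i = n * a := by rw [hσsum, ← hna]
    have htr : Matrix.trace G⁻¹ = ∑ i, (ev i)⁻¹ := aux_trace_inv G hG
    have key : ∀ i, (ev i)⁻¹ = 1 / a - (ev i - a) / a ^ 2 + (ev i - a) ^ 2 / (a ^ 2 * ev i) := by
      intro i
      have h1 := (hevpos i).ne'
      field_simp
      ring
    have h2 : ∑ i, (ev i - a) / a ^ 2 = 0 := by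
      rw [← Finset.sum_div, Finset.sum_sub_distrib, hsumev, Finset.sum_const, Finset.card_univ,
        Fintype.card_fin, nsmul_eq_mul, sub_self, zero_div]
    have hS : Matrix.trace G⁻¹ = n / a + ∑ i, (ev i - a) ^ 2 / (a ^ 2 * ev i) := by
      rw [htr, Finset.sum_congr rfl fun i _ => key i, Finset.sum_add_distrib,
        Finset.sum_sub_distrib, h2, Finset.sum_const, Finset.card_univ, Fintype.card_fin,
        nsmul_eq_mul, sub_zero, mul_one_div]
    have hSnn : 0 ≤ ∑ i, (ev i - a) ^ 2 / (a ^ 2 * ev i) :=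
      Finset.sum_nonneg fun i _ => div_nonneg (sq_nonneg _) (mul_pos (pow_pos hap 2) (hevpos i)).le
    refine ⟨by rw [hS]; linarith, ?_⟩
    intro heq
    have hS0 : ∑ i, (ev i - a) ^ 2 / (a ^ 2 * ev i) = 0 := by
      rw [hS] at heq; linarith
    have hterm : ∀ i ∈ Finset.univ, (ev i - a) ^ 2 / (a ^ 2 * ev i) = 0 :=
      (Finset.sum_eq_zero_iff_of_nonneg fun i _ => div_nonneg (sq_nonneg _) (mul_pos (pow_pos hap 2) (hevpos i)).le).mp hS0
    have heva : ∀ i, ev i = a := by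
      intro i
      have h0 := hterm i (Finset.mem_univ i)
      have hd : (0 : ℝ) < a ^ 2 * ev i := mul_pos (pow_pos hap 2) (hevpos i)
      rcases div_eq_zero_iff.mp h0 with h | h
      · have := pow_eq_zero_iff two_ne_zero |>.mp h
        linarith
      · exact absurd h hd.ne'
    -- conclude G = a • 1
    have hU1 : (hG.1.eigenvectorUnitary : Matrix (Fin n) (Fin n) ℝ) *
        star (hG.1.eigenvectorUnitary : Matrix (Fin n) (Fin n) ℝ) = 1 :=
      Matrix.mem_unitaryGroup_iff.mp hG.1.eigenvectorUnitary.2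
    have hdiag : Matrix.diagonal (RCLike.ofReal ∘ hG.1.eigenvalues) =
        a • (1 : Matrix (Fin n) (Fin n) ℝ) := by
      have hfun : (RCLike.ofReal ∘ hG.1.eigenvalues : Fin n → ℝ) = fun _ => a := by
        funext i
        simpa using heva i
      rw [smul_one_eq_diagonal, hfun]
    conv_lhs => rw [hG.1.spectral_theorem, Unitary.conjStarAlgAut_apply]
    rw [hdiag, Matrix.mul_smul, mul_one, Matrix.smul_mul, hU1]
end

section
/- Let (v_i)_{i∈ℕ} be a square-summable nonzero family in ℝⁿ. Define the normalized frame potential NFP := (Σ_i Σ_j |⟨v_i, v_j⟩|²)/(Σ_i ‖v_i‖²)². Then NFP ≥ 1/dim(span{v_i}), in particular NFP ≥ 1/n. -/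
open scoped RealInnerProductSpace

lemma frame_pot_aux {d : ℕ} (u : ℕ → EuclideanSpace ℝ (Fin d))
    (hsq : Summable (fun i => ‖u i‖ ^ 2)) :
    (∑' i, ‖u i‖ ^ 2) ^ 2 ≤ d * ∑' i, ∑' j, ⟪u i, u j⟫ ^ 2 := by
  have hnorm : ∀ (i : ℕ), ‖u i‖ ^ 2 = ∑ a, (u i a) ^ 2 := by
    intro i
    rw [EuclideanSpace.norm_eq, Real.sq_sqrt (by positivity)]
    simp [Real.norm_eq_abs, sq_abs]
  have hinner : ∀ i j, ⟪u i, u j⟫ = ∑ a, u i a * u j a := by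
    intro i j; simp [PiLp.inner_apply, mul_comm]
  have hcoord : ∀ (i : ℕ) (a : Fin d), (u i a) ^ 2 ≤ ‖u i‖ ^ 2 := by
    intro i a
    rw [hnorm i]
    exact Finset.single_le_sum (f := fun b => (u i b) ^ 2) (fun b _ => sq_nonneg _) (Finset.mem_univ a)
  have habs : ∀ (i : ℕ) (a b : Fin d), |u i a * u i b| ≤ ‖u i‖ ^ 2 := by
    intro i a b
    have h1 := hcoord i a
    have h2 := hcoord i b
    have h3 := sq_nonneg (u i a - u i b)
    have h4 := sq_nonneg (u i a + u i b)
    rw [abs_le]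
    constructor <;> nlinarith
  have hS : ∀ (a b : Fin d), Summable (fun i => u i a * u i b) := by
    intro a b
    exact (Summable.of_nonneg_of_le (fun i => abs_nonneg _)
      (fun i => habs i a b) hsq).of_abs
  set M : Fin d → Fin d → ℝ := fun a b => ∑' i, u i a * u i b with hM
  -- step 1
  have step1 : ∑' i, ‖u i‖ ^ 2 = ∑ a, M a a := by
    calc ∑' i, ‖u i‖ ^ 2 = ∑' i, ∑ a, (u i a) ^ 2 := tsum_congr fun i => hnorm i
      _ = ∑ a, ∑' i, (u i a) ^ 2 :=
          Summable.tsum_finsetSum (fun a _ => by simpa [sq] using hS a a)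
      _ = ∑ a, M a a := by
          refine Finset.sum_congr rfl fun a _ => tsum_congr fun i => sq (u i a)
  -- step 2
  have hsqj : ∀ i, Summable (fun j => ⟪u i, u j⟫ ^ 2) := by
    intro i
    refine Summable.of_nonneg_of_le (fun j => sq_nonneg _) (fun j => ?_)
      (hsq.mul_left (‖u i‖ ^ 2))
    calc ⟪u i, u j⟫ ^ 2 = |⟪u i, u j⟫| ^ 2 := (sq_abs _).symm
      _ ≤ (‖u i‖ * ‖u j‖) ^ 2 :=
          pow_le_pow_left₀ (abs_nonneg _) (abs_real_inner_le_norm _ _) 2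
      _ = ‖u i‖ ^ 2 * ‖u j‖ ^ 2 := by ring
  have inner_expand : ∀ i j, ⟪u i, u j⟫ ^ 2
      = ∑ a, ∑ b, (u i a * u i b) * (u j a * u j b) := by
    intro i j
    rw [hinner, sq, Finset.sum_mul_sum]
    exact Finset.sum_congr rfl fun a _ => Finset.sum_congr rfl fun b _ => by ring
  have stepj : ∀ i, ∑' j, ⟪u i, u j⟫ ^ 2 = ∑ a, ∑ b, (u i a * u i b) * M a b := by
    intro i
    calc ∑' j, ⟪u i, u j⟫ ^ 2
        = ∑' j, ∑ a, ∑ b, (u i a * u i b) * (u j a * u j b) :=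
          tsum_congr fun j => inner_expand i j
      _ = ∑ a, ∑' j, ∑ b, (u i a * u i b) * (u j a * u j b) := by
          refine Summable.tsum_finsetSum fun a _ => ?_
          exact summable_sum fun b _ => ((hS a b).mul_left _)
      _ = ∑ a, ∑ b, ∑' j, (u i a * u i b) * (u j a * u j b) :=
          Finset.sum_congr rfl fun a _ =>
            Summable.tsum_finsetSum fun b _ => ((hS a b).mul_left _)
      _ = ∑ a, ∑ b, (u i a * u i b) * M a b :=
          Finset.sum_congr rfl fun a _ => Finset.sum_congr rfl fun b _ => tsum_mul_left
  have step2 : ∑' i, ∑' j, ⟪u i, u j⟫ ^ 2 = ∑ a, ∑ b, M a b ^ 2 := by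
    calc ∑' i, ∑' j, ⟪u i, u j⟫ ^ 2
        = ∑' i, ∑ a, ∑ b, (u i a * u i b) * M a b := tsum_congr fun i => stepj i
      _ = ∑ a, ∑' i, ∑ b, (u i a * u i b) * M a b := by
          refine Summable.tsum_finsetSum fun a _ => ?_
          exact summable_sum fun b _ => ((hS a b).mul_right _)
      _ = ∑ a, ∑ b, ∑' i, (u i a * u i b) * M a b :=
          Finset.sum_congr rfl fun a _ =>
            Summable.tsum_finsetSum fun b _ => ((hS a b).mul_right _)
      _ = ∑ a, ∑ b, M a b ^ 2 := by
          refine Finset.sum_congr rfl fun a _ => Finset.sum_congr rfl fun b _ => ?_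
          rw [tsum_mul_right, sq]
  rw [step1, step2]
  have h1 : (∑ a, M a a) ^ 2 ≤ (d : ℝ) * ∑ a, M a a ^ 2 := by
    have := Finset.sum_mul_sq_le_sq_mul_sq Finset.univ (fun _ => (1 : ℝ)) (fun a => M a a)
    simpa using this
  have h2 : ∑ a, M a a ^ 2 ≤ ∑ a, ∑ b, M a b ^ 2 :=
    Finset.sum_le_sum fun a _ =>
      Finset.single_le_sum (f := fun b => M a b ^ 2) (fun b _ => sq_nonneg _) (Finset.mem_univ a)
  nlinarith [Nat.cast_nonneg (α := ℝ) d]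

theorem normalized_frame_potential_lower_bound
    {n : ℕ} (v : ℕ → EuclideanSpace ℝ (Fin n))
    (hsq : Summable (fun i => ‖v i‖ ^ 2))
    (hpos : 0 < ∑' i, ‖v i‖ ^ 2) :
    (1 : ℝ) / (Module.finrank ℝ (Submodule.span ℝ (Set.range v))) ≤
      (∑' i, ∑' j, ⟪v i, v j⟫ ^ 2) / (∑' i, ‖v i‖ ^ 2) ^ 2 ∧
    (1 : ℝ) / n ≤ (∑' i, ∑' j, ⟪v i, v j⟫ ^ 2) / (∑' i, ‖v i‖ ^ 2) ^ 2 := by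
  set W := Submodule.span ℝ (Set.range v) with hW
  set d := Module.finrank ℝ W with hd
  have hvW : ∀ i, v i ∈ W := fun i => Submodule.subset_span ⟨i, rfl⟩
  let b := stdOrthonormalBasis ℝ W
  let u : ℕ → EuclideanSpace ℝ (Fin d) := fun i => b.repr ⟨v i, hvW i⟩
  have hnormu : ∀ i, ‖u i‖ = ‖v i‖ := fun i => by
    rw [show ‖u i‖ = ‖(⟨v i, hvW i⟩ : W)‖ from b.repr.norm_map _]
    rfl
  have hinneru : ∀ i j, ⟪u i, u j⟫ = ⟪v i, v j⟫ := fun i j => by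
    rw [show ⟪u i, u j⟫ = ⟪(⟨v i, hvW i⟩ : W), (⟨v j, hvW j⟩ : W)⟫ from
      b.repr.inner_map_map _ _]
    rfl
  have hsqu : Summable (fun i => ‖u i‖ ^ 2) := by simpa [hnormu] using hsq
  have key := frame_pot_aux u hsqu
  rw [show (∑' i, ‖u i‖ ^ 2) = ∑' i, ‖v i‖ ^ 2 from tsum_congr fun i => by rw [hnormu],
    show (∑' i, ∑' j, ⟪u i, u j⟫ ^ 2) = ∑' i, ∑' j, ⟪v i, v j⟫ ^ 2 from
      tsum_congr fun i => tsum_congr fun j => by rw [hinneru]] at key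
  -- d positive
  have hex : ∃ i, v i ≠ 0 := by
    by_contra h
    push_neg at h
    simp [h] at hpos
  obtain ⟨i0, hi0⟩ := hex
  haveI : Nontrivial W := ⟨⟨⟨v i0, hvW i0⟩, 0, by simp [hi0]⟩⟩
  have hdpos : 0 < d := Module.finrank_pos
  have hdn : d ≤ n := by
    have := Submodule.finrank_le W
    simpa [finrank_euclideanSpace_fin] using this
  have hDpos : (0 : ℝ) < (∑' i, ‖v i‖ ^ 2) ^ 2 := by positivity
  have hgoal1 : (1 : ℝ) / d ≤ (∑' i, ∑' j, ⟪v i, v j⟫ ^ 2) / (∑' i, ‖v i‖ ^ 2) ^ 2 := by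
    rw [div_le_div_iff₀ (by exact_mod_cast hdpos) hDpos]
    linarith [key]
  refine ⟨hgoal1, le_trans ?_ hgoal1⟩
  have hn : 0 < n := lt_of_lt_of_le hdpos hdn
  apply one_div_le_one_div_of_le (by exact_mod_cast hdpos)
  exact_mod_cast hdn
end
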